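/- (Proposition 2.9(ii), classification part.) Let 𝕂 be an algebraically closed field, r and s nonzero in 𝕂 with rs⁻¹ not a root of unity, and m ≥ 0 an integer. Then every simple U_{r,s}(sl_2)-module of 𝕂-dimension m+1 is isomorphic to the module L(φ) for some nonzero φ ∈ 𝕂, where L(φ) is the (m+1)-dimensional module with basis v_0, …, v_m and action ω.v_j = φ(rs⁻¹)⁻ʲ v_j, ω′.v_j = φ(rs⁻¹)^{−(m−j)} v_j, e.v_j = φ r^{−m}[m+1−j] v_{j−1} (v_{−1} = 0), f.v_j = [j+1] v_{j+1} (v_{m+1} = 0). -/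

import Mathlib

/-- Generators of `U_{r,s}(sl_2)`: `e`, `f`, `ω`, `ω⁻¹`, `ω′`, `ω′⁻¹`. -/
inductive UGen : Type
  | e | f | w | winv | w' | w'inv

open FreeAlgebra in
/-- The defining relations of `U_{r,s}(sl_2)`. -/
inductive URel (𝕂 : Type) [Field 𝕂] (r s : 𝕂) :
    FreeAlgebra 𝕂 UGen → FreeAlgebra 𝕂 UGen → Prop
  | winv_right : URel 𝕂 r s (ι 𝕂 .w * ι 𝕂 .winv) 1
  | winv_left : URel 𝕂 r s (ι 𝕂 .winv * ι 𝕂 .w) 1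
  | w'inv_right : URel 𝕂 r s (ι 𝕂 .w' * ι 𝕂 .w'inv) 1
  | w'inv_left : URel 𝕂 r s (ι 𝕂 .w'inv * ι 𝕂 .w') 1
  | ww' : URel 𝕂 r s (ι 𝕂 .w * ι 𝕂 .w') (ι 𝕂 .w' * ι 𝕂 .w)
  | we : URel 𝕂 r s (ι 𝕂 .w * ι 𝕂 .e) ((r * s⁻¹) • (ι 𝕂 .e * ι 𝕂 .w))
  | wf : URel 𝕂 r s (ι 𝕂 .w * ι 𝕂 .f) ((r⁻¹ * s) • (ι 𝕂 .f * ι 𝕂 .w))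
  | w'e : URel 𝕂 r s (ι 𝕂 .w' * ι 𝕂 .e) ((r⁻¹ * s) • (ι 𝕂 .e * ι 𝕂 .w'))
  | w'f : URel 𝕂 r s (ι 𝕂 .w' * ι 𝕂 .f) ((r * s⁻¹) • (ι 𝕂 .f * ι 𝕂 .w'))
  | ef : URel 𝕂 r s (ι 𝕂 .e * ι 𝕂 .f - ι 𝕂 .f * ι 𝕂 .e)
      ((r - s)⁻¹ • (ι 𝕂 .w - ι 𝕂 .w'))

/-- The two-parameter quantum group `U_{r,s}(sl_2)`: the quotient of the free
algebra on the six generators by the defining relations. -/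
abbrev Ursl2 (𝕂 : Type) [Field 𝕂] (r s : 𝕂) : Type := RingQuot (URel 𝕂 r s)

/-- The image of a generator in `U_{r,s}(sl_2)`. -/
def UGen.toU {𝕂 : Type} [Field 𝕂] (r s : 𝕂) (x : UGen) : Ursl2 𝕂 r s :=
  RingQuot.mkAlgHom 𝕂 (URel 𝕂 r s) (FreeAlgebra.ι 𝕂 x)

/-- The quantum integer `[m] = (rᵐ − sᵐ)/(r − s)`. -/
def qInt {𝕂 : Type} [Field 𝕂] (r s : 𝕂) (m : ℕ) : 𝕂 := (r ^ m - s ^ m) / (r - s)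

/-- The family `v_0, …, v_m` attached to a basis `b` of an `(m+1)`-dimensional
space, extended by `v_j = 0` for `j > m` (so `v_{−1} = v_{m+1} = 0`). -/
noncomputable def extb {𝕂 M : Type} [Field 𝕂] [AddCommGroup M] [Module 𝕂 M] {m : ℕ}
    (b : Module.Basis (Fin (m + 1)) 𝕂 M) (j : ℕ) : M :=
  if h : j < m + 1 then b ⟨j, h⟩ else 0


section Aux

variable {𝕂 : Type} [Field 𝕂]

private lemma aux_c_step (q lam beta d : 𝕂) (hq : q ≠ 0) (hq1 : q - 1 ≠ 0) (j : ℕ) :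
    d * (lam * q * (q ^ (j+1))⁻¹ - beta) * (q ^ (j+1) - 1) / (q - 1)
      = d * (lam * q * (q ^ j)⁻¹ - beta) * (q ^ j - 1) / (q - 1)
        + d * (lam * (q ^ j)⁻¹ - beta * q ^ j) := by
  have h2 : q ^ j ≠ 0 := pow_ne_zero _ hq
  field_simp
  ring

private lemma aux_beta (q lam beta d : 𝕂) (hd : d ≠ 0) (hq1 : q - 1 ≠ 0) (m : ℕ)
    (hqm : q ^ (m+1) ≠ 1)
    (hc : d * (lam * q * (q ^ (m+1))⁻¹ - beta) * (q ^ (m+1) - 1) / (q - 1) = 0) :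
    beta = lam * q * (q ^ (m+1))⁻¹ := by
  have h3 : q ^ (m+1) - 1 ≠ 0 := sub_ne_zero.mpr hqm
  rw [div_eq_zero_iff] at hc
  rcases hc with h | h
  · rcases mul_eq_zero.mp h with h' | h'
    · rcases mul_eq_zero.mp h' with h'' | h''
      · exact absurd h'' hd
      · exact (sub_eq_zero.mp h'').symm
    · exact absurd h' h3
  · exact absurd h hq1

private lemma aux_A (q lam : 𝕂) (hq : q ≠ 0) (hq1 : q - 1 ≠ 0) (j k : ℕ) :
    (lam * q * (q ^ (j+1))⁻¹ - lam * q * (q ^ (j+k+1+1))⁻¹) * (q ^ (j+1) - 1) / (q - 1)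
      = lam * q * (q ^ (j+k+1+1))⁻¹ * ((q ^ (k+1) - 1) * (q ^ (j+1) - 1) / (q - 1)) := by
  have h2 : ∀ n : ℕ, q ^ n ≠ 0 := fun n => pow_ne_zero _ hq
  field_simp
  ring

private lemma aux_C (r s lam : 𝕂) (hr : r ≠ 0) (hs : s ≠ 0) (hrs : r - s ≠ 0)
    (j k : ℕ) :
    (r - s)⁻¹ * (lam * (r*s⁻¹) * ((r*s⁻¹) ^ (j+k+1+1))⁻¹
        * (((r*s⁻¹) ^ (k+1) - 1) * ((r*s⁻¹) ^ (j+1) - 1) / ((r*s⁻¹) - 1)))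
      = lam * (r ^ (j+k+1) : 𝕂)⁻¹ * ((r ^ (k+1) - s ^ (k+1))/(r-s)) * ((r ^ (j+1) - s ^ (j+1))/(r-s)) := by
  have e1 : (r*s⁻¹) - 1 = (r - s) * s⁻¹ := by field_simp
  have e2 : ∀ n : ℕ, ((r*s⁻¹) ^ n)⁻¹ = s ^ n * (r ^ n)⁻¹ := by
    intro n; rw [mul_pow, inv_pow, mul_inv, inv_inv]; ring
  have e4 : ∀ n : ℕ, (r*s⁻¹) ^ n - 1 = (r ^ n - s ^ n) * (s ^ n)⁻¹ := by
    intro n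
    rw [mul_pow, inv_pow]
    field_simp
  rw [e1, e2, e4, e4]
  generalize (r ^ (k+1) - s ^ (k+1)) = X
  generalize (r ^ (j+1) - s ^ (j+1)) = Y
  revert hrs
  generalize (r - s) = Z
  intro hZ
  have h2 : ∀ n : ℕ, r ^ n ≠ 0 := fun n => pow_ne_zero _ hr
  have h3 : ∀ n : ℕ, s ^ n ≠ 0 := fun n => pow_ne_zero _ hs
  field_simp
  ring

private lemma aux_w (q lam f : 𝕂) (hq : q ≠ 0) (m j : ℕ) :
    f * (lam * q * (q ^ (m+1))⁻¹ * q ^ j) = lam * (q ^ j / q ^ m) * f := by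
  have h2 : ∀ n : ℕ, q ^ n ≠ 0 := fun n => pow_ne_zero _ hq
  rw [pow_succ]
  field_simp

private lemma aux_cancel (a b x : 𝕂) (hb : b ≠ 0) :
    (a * b)⁻¹ * (x * b) = x * a⁻¹ := by
  rw [mul_inv]
  calc a⁻¹ * b⁻¹ * (x * b) = x * a⁻¹ * (b⁻¹ * b) := by ring
  _ = x * a⁻¹ := by rw [inv_mul_cancel₀ hb, mul_one]

private lemma aux_f (a b : 𝕂) (hb : b ≠ 0) :
    a⁻¹ = b * ((a * b)⁻¹) := by
  rw [mul_inv]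
  calc a⁻¹ = a⁻¹ * (b * b⁻¹) := by rw [mul_inv_cancel₀ hb, mul_one]
  _ = b * (a⁻¹ * b⁻¹) := by ring

end Aux

/-- Proposition 2.9(ii), classification part: over an algebraically closed field,
every simple `U_{r,s}(sl_2)`-module of `𝕂`-dimension `m+1` is isomorphic to `L(φ)`
for some nonzero `φ`, i.e. it has a basis `v_0, …, v_m` in which
`ω.v_j = φ(rs⁻¹)⁻ʲ v_j`, `ω′.v_j = φ(rs⁻¹)^{−(m−j)} v_j`,
`e.v_j = φ r^{−m}[m+1−j] v_{j−1}` (`v_{−1} = 0`) and `f.v_j = [j+1] v_{j+1}`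
(`v_{m+1} = 0`). -/
theorem stmt13 {𝕂 : Type} [Field 𝕂] [IsAlgClosed 𝕂] (r s : 𝕂) (hr : r ≠ 0) (hs : s ≠ 0)
    (hroot : ∀ k : ℤ, (r * s⁻¹) ^ k = 1 → k = 0) (m : ℕ)
    (M : Type) [AddCommGroup M] [Module 𝕂 M]
    (ρ : Ursl2 𝕂 r s →ₐ[𝕂] Module.End 𝕂 M)
    (hdim : Module.finrank 𝕂 M = m + 1)
    (hsimple : letI : Module (Ursl2 𝕂 r s) M := Module.compHom M ρ.toRingHom
      IsSimpleModule (Ursl2 𝕂 r s) M) :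
    ∃ φ : 𝕂, φ ≠ 0 ∧ ∃ b : Module.Basis (Fin (m + 1)) 𝕂 M,
      (∀ j : ℕ, j ≤ m → ρ (UGen.toU r s .w) (extb b j) =
        (φ * (r * s⁻¹) ^ (-(j : ℤ))) • extb b j) ∧
      (∀ j : ℕ, j ≤ m → ρ (UGen.toU r s .w') (extb b j) =
        (φ * (r * s⁻¹) ^ (-((m : ℤ) - (j : ℤ)))) • extb b j) ∧
      (ρ (UGen.toU r s .e) (extb b 0) = 0) ∧
      (∀ j : ℕ, j + 1 ≤ m → ρ (UGen.toU r s .e) (extb b (j + 1)) =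
        (φ * r ^ (-(m : ℤ)) * qInt r s (m - j)) • extb b j) ∧
      (∀ j : ℕ, j ≤ m → ρ (UGen.toU r s .f) (extb b j) =
        qInt r s (j + 1) • extb b (j + 1)) := by
  classical
  letI : Module (Ursl2 𝕂 r s) M := Module.compHom M ρ.toRingHom
  have hsimple' : IsSimpleModule (Ursl2 𝕂 r s) M := hsimple
  -- basic scalar facts
  have hsinv : s⁻¹ ≠ 0 := inv_ne_zero hs
  have hq0 : r * s⁻¹ ≠ 0 := mul_ne_zero hr hsinv
  have hqpow : ∀ n : ℕ, n ≠ 0 → (r * s⁻¹) ^ n ≠ 1 := by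
    intro n hn h
    have h2 : ((r * s⁻¹) : 𝕂) ^ (n : ℤ) = 1 := by rw [zpow_natCast]; exact h
    have := hroot _ h2
    omega
  have hqne1 : (r * s⁻¹) ≠ 1 := by simpa using hqpow 1 one_ne_zero
  have hq1 : (r * s⁻¹) - 1 ≠ 0 := sub_ne_zero.mpr hqne1
  have hrs : r - s ≠ 0 := by
    intro h
    exact hqne1 (by rw [sub_eq_zero.mp h, mul_inv_cancel₀ hs])
  have hqpowinj : ∀ a b : ℕ, (r*s⁻¹) ^ a = (r*s⁻¹) ^ b → a = b := by
    intro a b hab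
    have h1 : ((r*s⁻¹) : 𝕂) ^ ((a:ℤ) - (b:ℤ)) = 1 := by
      rw [zpow_sub₀ hq0, zpow_natCast, zpow_natCast, hab, div_self (pow_ne_zero _ hq0)]
    have := hroot _ h1
    omega
  have hqInt_ne : ∀ j : ℕ, qInt r s (j+1) ≠ 0 := by
    intro j
    apply div_ne_zero _ hrs
    intro h
    apply hqpow (j+1) (by omega)
    have hsj : (s:𝕂) ^ (j+1) ≠ 0 := pow_ne_zero _ hs
    rw [mul_pow, inv_pow, sub_eq_zero.mp h]
    exact mul_inv_cancel₀ hsj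
  haveI : FiniteDimensional 𝕂 M := FiniteDimensional.of_finrank_pos (by rw [hdim]; omega)
  haveI : Nontrivial M := Module.nontrivial_of_finrank_pos (R := 𝕂) (by rw [hdim]; omega)
  -- the relations in End
  have hrel : ∀ {x y : FreeAlgebra 𝕂 UGen}, URel 𝕂 r s x y →
      ρ (RingQuot.mkAlgHom 𝕂 (URel 𝕂 r s) x) = ρ (RingQuot.mkAlgHom 𝕂 (URel 𝕂 r s) y) :=
    fun h => by rw [RingQuot.mkAlgHom_rel 𝕂 h]
  have hWWi : ρ (UGen.toU r s .w) * ρ (UGen.toU r s .winv) = 1 := by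
    simpa only [UGen.toU, map_mul, map_one] using hrel URel.winv_right
  have hWiW : ρ (UGen.toU r s .winv) * ρ (UGen.toU r s .w) = 1 := by
    simpa only [UGen.toU, map_mul, map_one] using hrel URel.winv_left
  have hW'W'i : ρ (UGen.toU r s .w') * ρ (UGen.toU r s .w'inv) = 1 := by
    simpa only [UGen.toU, map_mul, map_one] using hrel URel.w'inv_right
  have hW'iW' : ρ (UGen.toU r s .w'inv) * ρ (UGen.toU r s .w') = 1 := by
    simpa only [UGen.toU, map_mul, map_one] using hrel URel.w'inv_left
  have hWW' : ρ (UGen.toU r s .w) * ρ (UGen.toU r s .w')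
      = ρ (UGen.toU r s .w') * ρ (UGen.toU r s .w) := by
    simpa only [UGen.toU, map_mul] using hrel URel.ww'
  have hWE : ρ (UGen.toU r s .w) * ρ (UGen.toU r s .e)
      = (r * s⁻¹) • (ρ (UGen.toU r s .e) * ρ (UGen.toU r s .w)) := by
    simpa only [UGen.toU, map_mul, map_smul] using hrel URel.we
  have hWF : ρ (UGen.toU r s .w) * ρ (UGen.toU r s .f)
      = (r⁻¹ * s) • (ρ (UGen.toU r s .f) * ρ (UGen.toU r s .w)) := by
    simpa only [UGen.toU, map_mul, map_smul] using hrel URel.wf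
  have hW'E : ρ (UGen.toU r s .w') * ρ (UGen.toU r s .e)
      = (r⁻¹ * s) • (ρ (UGen.toU r s .e) * ρ (UGen.toU r s .w')) := by
    simpa only [UGen.toU, map_mul, map_smul] using hrel URel.w'e
  have hW'F : ρ (UGen.toU r s .w') * ρ (UGen.toU r s .f)
      = (r * s⁻¹) • (ρ (UGen.toU r s .f) * ρ (UGen.toU r s .w')) := by
    simpa only [UGen.toU, map_mul, map_smul] using hrel URel.w'f
  have hEF : ρ (UGen.toU r s .e) * ρ (UGen.toU r s .f)
        - ρ (UGen.toU r s .f) * ρ (UGen.toU r s .e)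
      = (r - s)⁻¹ • (ρ (UGen.toU r s .w) - ρ (UGen.toU r s .w')) := by
    simpa only [UGen.toU, map_mul, map_sub, map_smul] using hrel URel.ef
  set E := ρ (UGen.toU r s .e) with hE_def
  set F := ρ (UGen.toU r s .f) with hF_def
  set W := ρ (UGen.toU r s .w) with hW_def
  set W' := ρ (UGen.toU r s .w') with hW'_def
  set Wi := ρ (UGen.toU r s .winv) with hWi_def
  set W'i := ρ (UGen.toU r s .w'inv) with hW'i_def
  -- vector forms
  have hWEv : ∀ x : M, W (E x) = (r * s⁻¹) • E (W x) := by
    intro x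
    have h := LinearMap.ext_iff.mp hWE x
    simpa only [Module.End.mul_apply, LinearMap.smul_apply, map_smul] using h
  have hWFv : ∀ x : M, W (F x) = (r⁻¹ * s) • F (W x) := by
    intro x
    have h := LinearMap.ext_iff.mp hWF x
    simpa only [Module.End.mul_apply, LinearMap.smul_apply, map_smul] using h
  have hW'Fv : ∀ x : M, W' (F x) = (r * s⁻¹) • F (W' x) := by
    intro x
    have h := LinearMap.ext_iff.mp hW'F x
    simpa only [Module.End.mul_apply, LinearMap.smul_apply, map_smul] using h
  have hEFv : ∀ x : M, E (F x) = F (E x) + (r - s)⁻¹ • (W x - W' x) := by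
    intro x
    have h := LinearMap.ext_iff.mp hEF x
    simp only [LinearMap.sub_apply, Module.End.mul_apply, LinearMap.smul_apply,
      map_sub] at h
    rw [← h]
    abel
  -- helper : inverse pairs and eigenvectors
  have hinv_eig : ∀ (T Ti : Module.End 𝕂 M), Ti * T = 1 → ∀ (μ : 𝕂) (v : M), v ≠ 0 →
      T v = μ • v → μ ≠ 0 ∧ Ti v = μ⁻¹ • v := by
    intro T Ti hTi μ v hv hTv
    have h1 : Ti (T v) = v := by
      rw [← Module.End.mul_apply, hTi, Module.End.one_apply]
    have hμ : μ ≠ 0 := by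
      intro h
      apply hv
      rw [hTv, h, zero_smul, map_zero] at h1
      exact h1.symm
    refine ⟨hμ, ?_⟩
    rw [hTv, map_smul] at h1
    have h2 := congrArg (fun z => μ⁻¹ • z) h1
    simp only [smul_smul, inv_mul_cancel₀ hμ, one_smul] at h2
    exact h2
  -- find a highest eigenvalue for W
  obtain ⟨μ₀, hμ₀⟩ := Module.End.exists_eigenvalue W
  obtain ⟨x₀, hx₀⟩ := hμ₀.exists_hasEigenvector
  have hμ₀ne : μ₀ ≠ 0 :=
    (hinv_eig W Wi hWiW μ₀ x₀ hx₀.2 (Module.End.mem_eigenspace_iff.mp hx₀.1)).1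
  have hex : ∃ n : ℕ, Module.End.eigenspace W ((r*s⁻¹) ^ n * μ₀) = ⊥ := by
    by_contra hcon
    push_neg at hcon
    have hev : ∀ i : Fin (m+2), Module.End.HasEigenvalue W ((r*s⁻¹) ^ (i:ℕ) * μ₀) :=
      fun i => hcon i
    choose x hx using fun i : Fin (m+2) => (hev i).exists_hasEigenvector
    have hinj : Function.Injective (fun i : Fin (m+2) => (r*s⁻¹) ^ (i:ℕ) * μ₀) := by
      intro a b hab
      simp only at hab
      have := hqpowinj a b (mul_right_cancel₀ hμ₀ne hab)
      exact Fin.ext this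
    have li := Module.End.eigenvectors_linearIndependent' W
      (fun i : Fin (m+2) => (r*s⁻¹) ^ (i:ℕ) * μ₀) hinj x hx
    have hc := li.fintype_card_le_finrank
    rw [hdim, Fintype.card_fin] at hc
    omega
  set n := Nat.find hex with hn_def
  have hn_bot : Module.End.eigenspace W ((r*s⁻¹) ^ n * μ₀) = ⊥ := Nat.find_spec hex
  have hn_pos : n ≠ 0 := by
    intro h
    rw [h, pow_zero, one_mul] at hn_bot
    exact hμ₀ hn_bot
  obtain ⟨n', hn'⟩ : ∃ n', n = n' + 1 := ⟨n - 1, by omega⟩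
  clear_value n
  set lam := (r*s⁻¹) ^ n' * μ₀ with hlam_def
  have hlamne : lam ≠ 0 := mul_ne_zero (pow_ne_zero _ hq0) hμ₀ne
  have hprev : Module.End.eigenspace W lam ≠ ⊥ := by
    have := Nat.find_min hex (m := n') (by omega)
    exact this
  have hnext : Module.End.eigenspace W ((r*s⁻¹) * lam) = ⊥ := by
    have h1 : (r*s⁻¹) * lam = (r*s⁻¹) ^ n * μ₀ := by
      rw [hlam_def, hn', pow_succ]
      ring
    rw [h1]
    exact hn_bot
  have hEkill : ∀ v ∈ Module.End.eigenspace W lam, E v = 0 := by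
    intro v hv
    have hv' := Module.End.mem_eigenspace_iff.mp hv
    have h1 : W (E v) = ((r*s⁻¹) * lam) • E v := by
      rw [hWEv, hv', map_smul, smul_smul]
    have h2 : E v ∈ Module.End.eigenspace W ((r*s⁻¹) * lam) :=
      Module.End.mem_eigenspace_iff.mpr h1
    rw [hnext] at h2
    simpa using h2
  -- find common eigenvector v0
  have hW'P : ∀ v ∈ Module.End.eigenspace W lam, W' v ∈ Module.End.eigenspace W lam := by
    intro v hv
    rw [Module.End.mem_eigenspace_iff] at hv ⊢
    have : W (W' v) = W' (W v) := by
      have h := LinearMap.ext_iff.mp hWW' v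
      simpa only [Module.End.mul_apply] using h
    rw [this, hv, map_smul]
  haveI : Nontrivial (Module.End.eigenspace W lam) :=
    Submodule.nontrivial_iff_ne_bot.mpr hprev
  obtain ⟨β, hβ⟩ := Module.End.exists_eigenvalue
    ((W' : M →ₗ[𝕂] M).restrict hW'P)
  obtain ⟨w0, hw0⟩ := hβ.exists_hasEigenvector
  set v0 : M := (w0 : M) with hv0_def
  have hv0ne : v0 ≠ 0 := fun h => hw0.2 (Subtype.ext h)
  have hWv0 : W v0 = lam • v0 := Module.End.mem_eigenspace_iff.mp w0.2
  have hW'v0 : W' v0 = β • v0 := by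
    have h1 := hw0.apply_eq_smul
    have h2 := congrArg (Subtype.val) h1
    simpa only [LinearMap.restrict_apply, SetLike.val_smul] using h2
  have hEv0 : E v0 = 0 := hEkill v0 w0.2
  have hβne : β ≠ 0 := (hinv_eig W' W'i hW'iW' β v0 hv0ne hW'v0).1
  clear_value lam v0
  -- the sequence u j = F^j v0
  set u : ℕ → M := fun j => (F ^ j) v0 with hu_def
  have hu0 : u 0 = v0 := by simp [hu_def]
  have huS : ∀ j, u (j+1) = F (u j) := by
    intro j
    simp only [hu_def, pow_succ', Module.End.mul_apply]
  have hadd : ∀ j i, u (j + i) = (F ^ i) (u j) := by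
    intro j i
    induction i with
    | zero => simp
    | succ i ih => rw [show j + (i+1) = (j+i) + 1 by omega, huS, ih, pow_succ', Module.End.mul_apply]
  clear_value u
  -- eigenvalue facts along u
  have hWu : ∀ j, W (u j) = (lam * ((r*s⁻¹) ^ j)⁻¹) • u j := by
    intro j
    induction j with
    | zero => simpa [hu0] using hWv0
    | succ j ih =>
      rw [huS, hWFv, ih, map_smul, smul_smul]
      congr 1
      have h1 : r⁻¹ * s = ((r*s⁻¹):𝕂)⁻¹ := by
        rw [mul_inv, inv_inv]
      rw [h1, pow_succ, mul_inv]
      ring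
  have hW'u : ∀ j, W' (u j) = (β * (r*s⁻¹) ^ j) • u j := by
    intro j
    induction j with
    | zero => simpa [hu0] using hW'v0
    | succ j ih =>
      rw [huS, hW'Fv, ih, map_smul, smul_smul, pow_succ]
      congr 1
      ring
  -- the E-coefficients
  set c : ℕ → 𝕂 := fun j =>
    (r-s)⁻¹ * (lam * (r*s⁻¹) * ((r*s⁻¹) ^ j)⁻¹ - β) * ((r*s⁻¹) ^ j - 1) / ((r*s⁻¹) - 1)
    with hc_def
  have hc0 : c 0 = 0 := by simp [hc_def]
  have hEu : ∀ j, E (u (j+1)) = c (j+1) • u j := by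
    intro j
    induction j with
    | zero =>
      rw [huS, hEFv, hu0, hEv0, map_zero, hWv0, hW'v0, zero_add]
      have h1 : c (0+1) = (r-s)⁻¹ * (lam - β) := by
        simp only [hc_def]
        rw [aux_c_step _ _ _ _ hq0 hq1 0]
        norm_num
      rw [h1]
      module
    | succ j ih =>
      rw [huS ((j+1)), hEFv, ih, map_smul, hWu, hW'u, ← huS]
      match_scalars
      simp only [hc_def]
      rw [aux_c_step _ lam β ((r-s)⁻¹) hq0 hq1 (j+1)]
      ring
  -- the span of the u j is a U-submodule, hence everything
  set N : Submodule 𝕂 M := Submodule.span 𝕂 (Set.range u) with hN_def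
  have huN : ∀ j, u j ∈ N := fun j => Submodule.subset_span ⟨j, rfl⟩
  have hstab : ∀ (T : Module.End 𝕂 M), (∀ j, T (u j) ∈ N) → ∀ v ∈ N, T v ∈ N := by
    intro T hT v hv
    induction hv using Submodule.span_induction with
    | mem x hx => obtain ⟨j, rfl⟩ := hx; exact hT j
    | zero => simp
    | add x y hx' hy' hx hy => rw [map_add]; exact N.add_mem hx hy
    | smul a x hx' hx => rw [map_smul]; exact N.smul_mem a hx
  have hWN : ∀ v ∈ N, W v ∈ N := by
    intro v hv
    refine hstab W (fun j => ?_) v hv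
    rw [hWu]
    exact N.smul_mem _ (huN j)
  have hW'N : ∀ v ∈ N, W' v ∈ N := by
    intro v hv
    refine hstab W' (fun j => ?_) v hv
    rw [hW'u]
    exact N.smul_mem _ (huN j)
  have hFN : ∀ v ∈ N, F v ∈ N := by
    intro v hv
    refine hstab F (fun j => ?_) v hv
    rw [← huS]
    exact huN (j+1)
  have hEN : ∀ v ∈ N, E v ∈ N := by
    intro v hv
    refine hstab E (fun j => ?_) v hv
    cases j with
    | zero => rw [hu0, hEv0]; exact N.zero_mem
    | succ j => rw [hEu]; exact N.smul_mem _ (huN j)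
  have hWiN : ∀ v ∈ N, Wi v ∈ N := by
    intro v hv
    refine hstab Wi (fun j => ?_) v hv
    rcases eq_or_ne (u j) 0 with h | h
    · rw [h, map_zero]; exact N.zero_mem
    · obtain ⟨-, h2⟩ := hinv_eig W Wi hWiW _ (u j) h (hWu j)
      rw [h2]
      exact N.smul_mem _ (huN j)
  have hW'iN : ∀ v ∈ N, W'i v ∈ N := by
    intro v hv
    refine hstab W'i (fun j => ?_) v hv
    rcases eq_or_ne (u j) 0 with h | h
    · rw [h, map_zero]; exact N.zero_mem
    · obtain ⟨-, h2⟩ := hinv_eig W' W'i hW'iW' _ (u j) h (hW'u j)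
      rw [h2]
      exact N.smul_mem _ (huN j)
  have hstabAll : ∀ (a : Ursl2 𝕂 r s), ∀ v ∈ N, ρ a v ∈ N := by
    intro a
    obtain ⟨x, rfl⟩ := RingQuot.mkAlgHom_surjective 𝕂 (URel 𝕂 r s) a
    induction x using FreeAlgebra.induction with
    | grade0 k =>
      intro v hv
      rw [AlgHom.commutes, AlgHom.commutes, Module.algebraMap_end_apply]
      exact N.smul_mem _ hv
    | grade1 g =>
      cases g with
      | e => exact fun v hv => hEN v hv
      | f => exact fun v hv => hFN v hv
      | w => exact fun v hv => hWN v hv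
      | winv => exact fun v hv => hWiN v hv
      | w' => exact fun v hv => hW'N v hv
      | w'inv => exact fun v hv => hW'iN v hv
    | mul x y hx hy =>
      intro v hv
      rw [map_mul, map_mul, Module.End.mul_apply]
      exact hx _ (hy v hv)
    | add x y hx hy =>
      intro v hv
      rw [map_add, map_add, LinearMap.add_apply]
      exact N.add_mem (hx v hv) (hy v hv)
  -- simplicity : N = everything
  have hNtop : ∀ v : M, v ∈ N := by
    let p : Submodule (Ursl2 𝕂 r s) M :=
      { carrier := (N : Set M)
        add_mem' := fun hx hy => N.add_mem hx hy
        zero_mem' := N.zero_mem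
        smul_mem' := fun a {v} hv => hstabAll a v hv }
    intro v
    rcases hsimple'.eq_bot_or_eq_top p with h | h
    · exfalso
      apply hv0ne
      have h0 : v0 ∈ p := by
        show v0 ∈ N
        rw [← hu0]; exact huN 0
      rw [h] at h0
      simpa using h0
    · have : v ∈ p := by rw [h]; trivial
      exact this
  clear_value E F W W' Wi W'i N
  -- u m is nonzero
  have humne : u m ≠ 0 := by
    intro h0
    have huzero : ∀ j, m ≤ j → u j = 0 := by
      intro j hj
      rw [show j = m + (j - m) by omega, hadd, h0, map_zero]
    have husub : ∀ j, u j ∈ Submodule.span 𝕂 (Set.range (fun i : Fin m => u (i:ℕ))) := by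
      intro j
      rcases lt_or_ge j m with hj | hj
      · exact Submodule.subset_span ⟨⟨j, hj⟩, rfl⟩
      · rw [huzero j hj]; exact Submodule.zero_mem _
    have hspan : (Submodule.span 𝕂 (Set.range (fun i : Fin m => u (i:ℕ)))) = ⊤ := by
      rw [eq_top_iff]
      intro v _
      have hvN : v ∈ Submodule.span 𝕂 (Set.range u) := by rw [← hN_def]; exact hNtop v
      refine Submodule.span_le.mpr ?_ hvN
      rintro x ⟨j, rfl⟩
      exact husub j
    have h2 := finrank_span_le_card (R := 𝕂) (Set.range (fun i : Fin m => u (i:ℕ)))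
    rw [hspan, finrank_top] at h2
    have h3 : (Set.range (fun i : Fin m => u (i:ℕ))).toFinset.card ≤ m := by
      rw [Set.toFinset_range]
      exact le_trans Finset.card_image_le (by simp)
    rw [hdim] at h2
    omega
  have hune : ∀ j, j ≤ m → u j ≠ 0 := by
    intro j hj h0
    apply humne
    rw [show m = j + (m - j) by omega, hadd, h0, map_zero]
  -- u (m+1) vanishes
  have hum1 : u (m+1) = 0 := by
    by_contra h0
    have hall : ∀ j : ℕ, j ≤ m+1 → u j ≠ 0 := by
      intro j hj h
      apply h0
      rw [show m+1 = j + (m+1-j) by omega, hadd, h, map_zero]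
    have hinj : Function.Injective (fun i : Fin (m+2) => lam * ((r*s⁻¹) ^ (i:ℕ))⁻¹) := by
      intro a b hab
      simp only at hab
      have h1 := mul_left_cancel₀ hlamne hab
      exact Fin.ext (hqpowinj _ _ (inv_injective h1))
    have li := Module.End.eigenvectors_linearIndependent' W
      (fun i : Fin (m+2) => lam * ((r*s⁻¹) ^ (i:ℕ))⁻¹) hinj (fun i => u (i:ℕ))
      (fun i => ⟨Module.End.mem_eigenspace_iff.mpr (hWu (i:ℕ)),
        hall (i:ℕ) (Nat.lt_succ_iff.mp i.isLt)⟩)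
    have hcard := li.fintype_card_le_finrank
    rw [hdim, Fintype.card_fin] at hcard
    omega
  -- the top coefficient vanishes, determining β
  have hcm1 : c (m+1) = 0 := by
    have h := hEu m
    rw [hum1, map_zero] at h
    rcases smul_eq_zero.mp h.symm with h | h
    · exact h
    · exact absurd h humne
  have hβval : β = lam * (r*s⁻¹) * ((r*s⁻¹) ^ (m+1))⁻¹ := by
    apply aux_beta _ _ _ _ (inv_ne_zero hrs) hq1 m (hqpow (m+1) (by omega))
    simpa only [hc_def] using hcm1
  -- quantum factorials
  set fact : ℕ → 𝕂 := fun j => ∏ i ∈ Finset.range j, qInt r s (i+1) with hfact_def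
  have hfact0 : fact 0 = 1 := by simp [hfact_def]
  have hfactS : ∀ j, fact (j+1) = fact j * qInt r s (j+1) := by
    intro j; simp [hfact_def, Finset.prod_range_succ]
  have hfactne : ∀ j, fact j ≠ 0 := by
    intro j
    simp only [hfact_def]
    exact Finset.prod_ne_zero_iff.mpr (fun i _ => hqInt_ne i)
  clear_value fact
  -- the basis
  have hvne : ∀ i : Fin (m+1), (fact (i:ℕ))⁻¹ • u (i:ℕ) ≠ 0 :=
    fun i => smul_ne_zero (inv_ne_zero (hfactne _)) (hune _ (Nat.lt_succ_iff.mp i.isLt))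
  have hWv : ∀ i : Fin (m+1), W ((fact (i:ℕ))⁻¹ • u (i:ℕ))
      = (lam * ((r*s⁻¹) ^ (i:ℕ))⁻¹) • ((fact (i:ℕ))⁻¹ • u (i:ℕ)) := by
    intro i
    rw [map_smul, hWu, smul_comm]
  have hinj1 : Function.Injective (fun i : Fin (m+1) => lam * ((r*s⁻¹) ^ (i:ℕ))⁻¹) := by
    intro a b hab
    simp only at hab
    have h1 := mul_left_cancel₀ hlamne hab
    exact Fin.ext (hqpowinj _ _ (inv_injective h1))
  have li : LinearIndependent 𝕂 (fun i : Fin (m+1) => (fact (i:ℕ))⁻¹ • u (i:ℕ)) :=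
    Module.End.eigenvectors_linearIndependent' W
      (fun i : Fin (m+1) => lam * ((r*s⁻¹) ^ (i:ℕ))⁻¹) hinj1 _
      (fun i => ⟨Module.End.mem_eigenspace_iff.mpr (hWv i), hvne i⟩)
  have hcard : Fintype.card (Fin (m+1)) = Module.finrank 𝕂 M := by
    rw [Fintype.card_fin, hdim]
  set b := basisOfLinearIndependentOfCardEqFinrank li hcard with hb_def
  have hb : ∀ i : Fin (m+1), b i = (fact (i:ℕ))⁻¹ • u (i:ℕ) := by
    intro i
    rw [hb_def]
    exact congrFun (coe_basisOfLinearIndependentOfCardEqFinrank _ _) i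
  clear_value b
  have hextb : ∀ j : ℕ, j ≤ m → extb b j = (fact j)⁻¹ • u j := by
    intro j hj
    have hj' : j < m + 1 := by omega
    simp only [extb, dif_pos hj']
    exact hb ⟨j, hj'⟩
  have hextb0 : extb b (m+1) = 0 := by
    simp only [extb]
    rw [dif_neg (by omega)]
  refine ⟨lam, hlamne, b, ?_, ?_, ?_, ?_, ?_⟩
  · -- action of ω
    intro j hj
    rw [hextb j hj, map_smul, hWu, zpow_neg, zpow_natCast]
    exact smul_comm _ _ _
  · -- action of ω'
    intro j hj
    rw [hextb j hj, map_smul, hW'u, hβval, smul_smul, smul_smul]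
    rw [neg_sub, zpow_sub₀ hq0, zpow_natCast, zpow_natCast]
    congr 1
    exact aux_w _ _ _ hq0 m j
  · -- e kills v₀
    rw [hextb 0 (by omega), map_smul, hu0, hEv0, smul_zero]
  · -- action of e
    intro j hj
    obtain ⟨k, hk⟩ : ∃ k, m = j + k + 1 := ⟨m - j - 1, by omega⟩
    have hcval : c (j+1) = lam * (r ^ m : 𝕂)⁻¹ * qInt r s (m - j) * qInt r s (j+1) := by
      rw [show m - j = k + 1 by omega]
      simp only [hc_def, hβval, qInt, hk]
      rw [mul_assoc ((r-s)⁻¹), mul_div_assoc]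
      rw [aux_A _ _ hq0 hq1 j k]
      exact aux_C r s lam hr hs hrs j k
    rw [hextb (j+1) (by omega), hextb j (by omega), map_smul, hEu]
    rw [smul_smul, smul_smul, zpow_neg, zpow_natCast]
    congr 1
    rw [hcval, hfactS]
    exact aux_cancel _ _ _ (hqInt_ne j)
  · -- action of f
    intro j hj
    rcases eq_or_lt_of_le hj with hj' | hj'
    · subst hj'
      rw [hextb j le_rfl, hextb0, map_smul, ← huS, hum1, smul_zero, smul_zero]
    · rw [hextb j hj, hextb (j+1) (by omega), map_smul, ← huS, smul_smul]
      congr 1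
      rw [hfactS]
      exact aux_f _ _ (hqInt_ne j)
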